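/- (Naimark's theorem.) A countable family X = {x_j}_{j ∈ J} in a separable Hilbert space H is a Parseval frame for H if and only if there exist a Hilbert space K containing H (i.e., H embeds isometrically into K) and an orthonormal basis {e_j}_{j ∈ J} of K such that the orthogonal projection P of K onto (the image of) H satisfies P e_j = x_j for every j ∈ J. -/

import Mathlib

open scoped ComplexInnerProductSpace ENNReal

set_option linter.unusedSectionVars false in
theorem naimark_bwd {H : Type} [NormedAddCommGroup H] [InnerProductSpace ℂ H]
    {J : Type} {K : Type} [NormedAddCommGroup K] [InnerProductSpace ℂ K]
    [CompleteSpace K] (x : J → H) (ι : H →ₗᵢ[ℂ] K) (e : HilbertBasis J ℂ K)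
    (P : K →L[ℂ] K)
    (horth : ∀ (y : K) (h : H), ⟪y - P y, ι h⟫ = 0)
    (hPe : ∀ j : J, P (e j) = ι (x j)) (v : H) :
    HasSum (fun j : J => ‖⟪x j, v⟫‖ ^ 2) (‖v‖ ^ 2) := by
  have key : ∀ j, ⟪e j, ι v⟫ = ⟪x j, v⟫ := by
    intro j
    have h1 : ⟪e j - P (e j), ι v⟫ = 0 := horth (e j) v
    have h2 : ⟪e j, ι v⟫ = ⟪e j - P (e j), ι v⟫ + ⟪P (e j), ι v⟫ := by
      rw [inner_sub_left]; ring
    rw [h2, h1, zero_add, hPe j, ι.inner_map_map]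
  have hs := e.hasSum_inner_mul_inner (ι v) (ι v)
  have heq : ∀ j, ⟪ι v, e j⟫ * ⟪e j, ι v⟫ = ((‖⟪x j, v⟫‖ ^ 2 : ℝ) : ℂ) := by
    intro j
    rw [← inner_conj_symm (ι v) ((e : J → K) j), key j, RCLike.conj_mul]
    norm_cast
  have hval : ⟪ι v, ι v⟫ = ((‖v‖ ^ 2 : ℝ) : ℂ) := by
    rw [ι.inner_map_map, inner_self_eq_norm_sq_to_K]
    norm_cast
  rw [hval] at hs
  simp_rw [heq] at hs
  exact Complex.hasSum_ofReal.mp hs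

theorem naimark_fwd {H : Type} [NormedAddCommGroup H] [InnerProductSpace ℂ H] [CompleteSpace H]
    {J : Type} (x : J → H)
    (hx : ∀ v : H, HasSum (fun j : J => ‖⟪x j, v⟫‖ ^ 2) (‖v‖ ^ 2)) :
    ∃ (K : Type) (_ : NormedAddCommGroup K) (_ : InnerProductSpace ℂ K)
        (_ : CompleteSpace K) (ι : H →ₗᵢ[ℂ] K) (e : HilbertBasis J ℂ K)
        (P : K →L[ℂ] K),
        (∀ y : K, ∃ h : H, P y = ι h) ∧
        (∀ (y : K) (h : H), ⟪y - P y, ι h⟫ = 0) ∧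
        (∀ j : J, P (e j) = ι (x j)) := by
  classical
  have hmem : ∀ v : H, Memℓp (fun j : J => (⟪x j, v⟫ : ℂ)) 2 := by
    intro v
    apply memℓp_gen
    have := (hx v).summable
    simpa [ENNReal.toReal_ofNat, Real.rpow_natCast] using this
  let Tfun : H → lp (fun _ : J => ℂ) 2 := fun v => ⟨fun j => ⟪x j, v⟫, hmem v⟩
  have Tcoe : ∀ (v : H) (j : J), (Tfun v : ∀ _ : J, ℂ) j = ⟪x j, v⟫ := fun v j => rfl
  have hnorm : ∀ v : H, ‖Tfun v‖ = ‖v‖ := by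
    intro v
    have h1 : HasSum (fun j : J => ‖(Tfun v : ∀ _ : J, ℂ) j‖ ^ ((2 : ℝ≥0∞).toReal))
        (‖Tfun v‖ ^ ((2 : ℝ≥0∞).toReal)) := lp.hasSum_norm (by norm_num) (Tfun v)
    have h2 : HasSum (fun j : J => ‖(Tfun v : ∀ _ : J, ℂ) j‖ ^ ((2 : ℝ≥0∞).toReal))
        (‖v‖ ^ 2) := by
      simpa [Tcoe, ENNReal.toReal_ofNat, Real.rpow_natCast] using hx v
    have h3 : ‖Tfun v‖ ^ ((2 : ℝ≥0∞).toReal) = ‖v‖ ^ 2 := h1.unique h2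
    rw [ENNReal.toReal_ofNat, Real.rpow_two, sq, sq] at h3
    nlinarith [norm_nonneg (Tfun v), norm_nonneg v]
  let T : H →ₗᵢ[ℂ] lp (fun _ : J => ℂ) 2 :=
    { toFun := Tfun
      map_add' := by
        intro u v
        ext j
        simp [Tcoe, inner_add_right]
      map_smul' := by
        intro c v
        ext j
        simp [Tcoe, inner_smul_right]
      norm_map' := hnorm }
  have Tapp : ∀ (v : H) (j : J), (T v : ∀ _ : J, ℂ) j = ⟪x j, v⟫ := Tcoe
  let K₀ : Submodule ℂ (lp (fun _ : J => ℂ) 2) := Submodule.map T.toLinearMap ⊤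
  have hK₀ : ∀ y, y ∈ K₀ ↔ ∃ h : H, T h = y := by
    intro y
    simp [K₀, Submodule.mem_map]
  haveI : CompleteSpace (⊤ : Submodule ℂ H) :=
    completeSpace_coe_iff_isComplete.2
      (by simpa using completeSpace_iff_isComplete_univ.mp inferInstance)
  haveI : CompleteSpace K₀ := LinearIsometry.completeSpace_map T ⊤
  let P : lp (fun _ : J => ℂ) 2 →L[ℂ] lp (fun _ : J => ℂ) 2 :=
    K₀.subtypeL.comp (K₀.orthogonalProjectionOnto)
  let e : HilbertBasis J ℂ (lp (fun _ : J => ℂ) 2) := default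
  have he : ∀ j : J, e j = lp.single 2 j 1 := fun j => rfl
  have hinner : ∀ (j : J) (h : H), ⟪(e j : lp (fun _ : J => ℂ) 2), T h⟫ = ⟪x j, h⟫ := by
    intro j h
    rw [he j, lp.inner_single_left]
    simp [Tapp]
  refine ⟨lp (fun _ : J => ℂ) 2, inferInstance, inferInstance, inferInstance, T, e, P,
    ?_, ?_, ?_⟩
  · intro y
    obtain ⟨h, hh⟩ := (hK₀ _).mp (K₀.orthogonalProjectionOnto y).2
    exact ⟨h, by simp [P, hh.symm]⟩
  · intro y h
    have hm := Submodule.sub_starProjection_mem_orthogonal (K := K₀) y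
    have h0 := hm (T h) ((hK₀ _).mpr ⟨h, rfl⟩)
    have hP : P y = K₀.starProjection y := rfl
    rw [hP, ← inner_conj_symm, h0, map_zero]
  · intro j
    have hmem' : T (x j) ∈ K₀ := (hK₀ _).mpr ⟨x j, rfl⟩
    have : K₀.starProjection (e j) = T (x j) := by
      apply Submodule.eq_starProjection_of_mem_of_inner_eq_zero hmem'
      intro w hw
      obtain ⟨h, rfl⟩ := (hK₀ w).mp hw
      rw [inner_sub_left, hinner, T.inner_map_map, sub_eq_zero]
    exact this

/-- Naimark's theorem: A countable family `X = {x_j}_{j ∈ J}` in a separable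
complex Hilbert space `H` is a Parseval frame for `H` iff there exist a Hilbert space `K`
into which `H` embeds isometrically (via a linear isometry `ι`), an orthonormal basis
`{e_j}_{j ∈ J}` of `K` (a Hilbert basis), and the orthogonal projection `P` of `K` onto
the image of `H` (characterized by: `P y` lies in `ι(H)` and `y - P y ⊥ ι(H)` for all
`y ∈ K`) satisfies `P e_j = ι x_j` for every `j ∈ J`. -/
theorem stmt_2 {H : Type} [NormedAddCommGroup H] [InnerProductSpace ℂ H] [CompleteSpace H]
    [TopologicalSpace.SeparableSpace H]
    {J : Type} [Countable J] (x : J → H) :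
    (∀ v : H, HasSum (fun j : J => ‖⟪x j, v⟫‖ ^ 2) (‖v‖ ^ 2)) ↔
      ∃ (K : Type) (_ : NormedAddCommGroup K) (_ : InnerProductSpace ℂ K)
        (_ : CompleteSpace K) (ι : H →ₗᵢ[ℂ] K) (e : HilbertBasis J ℂ K)
        (P : K →L[ℂ] K),
        (∀ y : K, ∃ h : H, P y = ι h) ∧
        (∀ (y : K) (h : H), ⟪y - P y, ι h⟫ = 0) ∧
        (∀ j : J, P (e j) = ι (x j)) := by
  constructor
  · exact naimark_fwd x
  · rintro ⟨K, _, _, _, ι, e, P, _, horth, hPe⟩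
    exact naimark_bwd x ι e P horth hPe
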